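/- Let F₁ and F₂ be edge sets of a hypergraph G such that F₁ ⊆ F₂ and every edge e ∈ F₂∖F₁ satisfies e ∩ V(F₁) ⊆ ∂(F₂). Then bw_G(F₁) ≤ bw_G(F₂). -/

import Mathlib

open Finset

universe u

/-- Rooted binary trees whose leaves carry labels of type `α`.  Every node has
at most two children; each leaf carries the edge assigned to it, so the leaf
map `φ` is built into the tree. -/
inductive BTree (α : Type u) : Type u where
  | leaf : α → BTree α
  | node1 : BTree α → BTree α
  | node2 : BTree α → BTree α → BTree α

namespace BTree

variable {α : Type u}

/-- The multiset of labels of the leaves of a tree. -/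
def leafLabels : BTree α → Multiset α
  | leaf a => {a}
  | node1 c => leafLabels c
  | node2 c₁ c₂ => leafLabels c₁ + leafLabels c₂

/-- `s.Occurs t` : `s` is (the subtree rooted at) a node of `t`. -/
def Occurs (s : BTree α) : BTree α → Prop
  | leaf a => s = leaf a
  | node1 c => s = node1 c ∨ Occurs s c
  | node2 c₁ c₂ => s = node2 c₁ c₂ ∨ Occurs s c₁ ∨ Occurs s c₂

/-- A tree is full if every internal node has exactly two children. -/
def IsFull : BTree α → Prop
  | leaf _ => True
  | node1 _ => False
  | node2 c₁ c₂ => IsFull c₁ ∧ IsFull c₂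

/-- The list of all (subtrees rooted at) nodes of a tree. -/
def nodes : BTree α → List (BTree α)
  | leaf a => [leaf a]
  | node1 c => node1 c :: nodes c
  | node2 c₁ c₂ => node2 c₁ c₂ :: (nodes c₁ ++ nodes c₂)

end BTree

variable {V : Type u} [DecidableEq V] [Fintype V]

/-- `vtxs F` is `V(F)` : the union of the hyperedges in `F`. -/
def vtxs (F : Finset (Finset V)) : Finset V := F.sup id

/-- The boundary `∂(F) = V(F) ∩ V(E ∖ F)` of an edge set `F` of the hypergraph
with edge set `E`. -/
def ebnd (E F : Finset (Finset V)) : Finset V := vtxs F ∩ vtxs (E \ F)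

/-- `t` is a (relaxed) branch-decomposition of the edge set `F` : the set of
leaf labels is exactly `F`, i.e. the leaf map is a surjection onto `F`. -/
def IsBD (F : Finset (Finset V)) (t : BTree (Finset V)) : Prop :=
  t.leafLabels.toFinset = F

/-- The lower edge set `L(p)` of a node `p` : the edges assigned to the leaves
in the subtree rooted at `p`. -/
def lowerSet (p : BTree (Finset V)) : Finset (Finset V) := p.leafLabels.toFinset

/-- The upper edge set `U(p)` of a node `p` of a branch-decomposition `t` of
`F` in the hypergraph with edge set `E` : the edges assigned to leaves outside
the subtree rooted at `p`, together with `E ∖ F`. -/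
def upperSet (E F : Finset (Finset V)) (t p : BTree (Finset V)) : Finset (Finset V) :=
  (t.leafLabels - p.leafLabels).toFinset ∪ (E \ F)

/-- The middle set `V(L(p)) ∩ V(U(p))` of a node `p`. -/
def midSet (E F : Finset (Finset V)) (t p : BTree (Finset V)) : Finset V :=
  vtxs (lowerSet p) ∩ vtxs (upperSet E F t p)

/-- The width of a branch-decomposition: the maximum order of a node. -/
def bdWidth (E F : Finset (Finset V)) (t : BTree (Finset V)) : ℕ :=
  (t.nodes.map (fun p => (midSet E F t p).card)).foldr max 0

/-- The branchwidth `bw_G(F)` of an edge set `F` of the hypergraph with edge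
set `E` : the minimum width of a branch-decomposition of `F`. -/
noncomputable def ebw (E F : Finset (Finset V)) : ℕ :=
  sInf {w | ∃ t : BTree (Finset V), IsBD F t ∧ bdWidth E F t = w}

/-- The branchwidth of a hypergraph given by its edge set. -/
noncomputable def hbw (E : Finset (Finset V)) : ℕ := ebw E E

namespace BTree2
open BTree
variable {α : Type u} [DecidableEq α]

def prune (F : Finset α) : BTree α → Option (BTree α)
  | .leaf a => if a ∈ F then some (.leaf a) else none
  | .node1 c => (prune F c).map .node1
  | .node2 c₁ c₂ =>
    match prune F c₁, prune F c₂ with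
    | some d₁, some d₂ => some (.node2 d₁ d₂)
    | some d₁, none => some (.node1 d₁)
    | none, some d₂ => some (.node1 d₂)
    | none, none => none

lemma leafLabels_prune (F : Finset α) (t : BTree α) :
    ((prune F t).elim 0 BTree.leafLabels) = t.leafLabels.filter (· ∈ F) := by
  induction t with
  | leaf a =>
      by_cases h : a ∈ F <;>
        simp [prune, h, BTree.leafLabels, Multiset.filter_singleton]
  | node1 c ih =>
      cases h : prune F c with
      | none => simp [prune, h, BTree.leafLabels] at ih ⊢; exact ih
      | some d => simpa [prune, h, BTree.leafLabels] using ih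
  | node2 c₁ c₂ ih₁ ih₂ =>
      cases h₁ : prune F c₁ <;> cases h₂ : prune F c₂ <;>
        simp [prune, h₁, h₂, BTree.leafLabels, Multiset.filter_add] at ih₁ ih₂ ⊢ <;>
        simp [← ih₁, ← ih₂]

lemma nodes_prune {F : Finset α} :
    ∀ {t t' : BTree α}, prune F t = some t' →
      ∀ q ∈ t'.nodes, ∃ p ∈ t.nodes, q.leafLabels = p.leafLabels.filter (· ∈ F) := by
  intro t
  induction t with
  | leaf a =>
      intro t' h q hq
      by_cases ha : a ∈ F
      · simp [prune, ha] at h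
        subst h
        simp [BTree.nodes] at hq
        subst hq
        exact ⟨.leaf a, by simp [BTree.nodes], by simp [BTree.leafLabels, Multiset.filter_singleton, ha]⟩
      · simp [prune, ha] at h
  | node1 c ih =>
      intro t' h q hq
      cases hc : prune F c with
      | none => simp [prune, hc] at h
      | some d =>
        simp [prune, hc] at h
        subst h
        simp [BTree.nodes] at hq
        rcases hq with rfl | hq
        · have := leafLabels_prune F (.node1 c)
          simp [prune, hc] at this
          exact ⟨.node1 c, by simp [BTree.nodes], by
            simpa [BTree.leafLabels] using this⟩
        · obtain ⟨p, hp, hpl⟩ := ih hc q hq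
          exact ⟨p, by simp [BTree.nodes]; right; exact hp, hpl⟩
  | node2 c₁ c₂ ih₁ ih₂ =>
      intro t' h q hq
      have key : (prune F (.node2 c₁ c₂)).elim 0 BTree.leafLabels
          = (BTree.node2 c₁ c₂).leafLabels.filter (· ∈ F) := leafLabels_prune F _
      cases h₁ : prune F c₁ <;> cases h₂ : prune F c₂ <;>
        simp [prune, h₁, h₂] at h key <;> subst h
      · -- none, some d₂ : t' = node1 d₂
        simp [BTree.nodes] at hq
        rcases hq with rfl | hq
        · exact ⟨.node2 c₁ c₂, by simp [BTree.nodes], by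
            simpa [BTree.leafLabels] using key⟩
        · obtain ⟨p, hp, hpl⟩ := ih₂ h₂ q hq
          exact ⟨p, by simp [BTree.nodes]; right; right; exact hp, hpl⟩
      · -- some d₁, none : t' = node1 d₁
        simp [BTree.nodes] at hq
        rcases hq with rfl | hq
        · exact ⟨.node2 c₁ c₂, by simp [BTree.nodes], by
            simpa [BTree.leafLabels] using key⟩
        · obtain ⟨p, hp, hpl⟩ := ih₁ h₁ q hq
          exact ⟨p, by simp [BTree.nodes]; right; left; exact hp, hpl⟩
      · -- some, some
        simp [BTree.nodes] at hq
        rcases hq with rfl | hq | hq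
        · exact ⟨.node2 c₁ c₂, by simp [BTree.nodes], by
            simpa [BTree.leafLabels] using key⟩
        · obtain ⟨p, hp, hpl⟩ := ih₁ h₁ q hq
          exact ⟨p, by simp [BTree.nodes]; right; left; exact hp, hpl⟩
        · obtain ⟨p, hp, hpl⟩ := ih₂ h₂ q hq
          exact ⟨p, by simp [BTree.nodes]; right; right; exact hp, hpl⟩

lemma card_leafLabels_pos (t : BTree α) : 0 < Multiset.card t.leafLabels := by
  induction t with
  | leaf a => simp [BTree.leafLabels]
  | node1 c ih => simpa [BTree.leafLabels] using ih
  | node2 c₁ c₂ ih₁ ih₂ => simp [BTree.leafLabels]; omega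

lemma leafLabels_le {t : BTree α} : ∀ {p : BTree α}, p ∈ t.nodes → p.leafLabels ≤ t.leafLabels := by
  induction t with
  | leaf a => intro p hp; simp [BTree.nodes] at hp; subst hp; exact le_refl _
  | node1 c ih =>
      intro p hp
      simp [BTree.nodes] at hp
      rcases hp with rfl | hp
      · exact le_refl _
      · simpa [BTree.leafLabels] using ih hp
  | node2 c₁ c₂ ih₁ ih₂ =>
      intro p hp
      simp [BTree.nodes] at hp
      rcases hp with rfl | hp | hp
      · exact le_refl _
      · exact le_trans (ih₁ hp) (by simp [BTree.leafLabels])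
      · exact le_trans (ih₂ hp) (by simp [BTree.leafLabels])

def ofList (a : α) : List α → BTree α
  | [] => .leaf a
  | b :: l => .node2 (.leaf a) (ofList b l)

lemma leafLabels_ofList (a : α) (l : List α) : (ofList a l).leafLabels = a ::ₘ (l : Multiset α) := by
  induction l generalizing a with
  | nil => simp [ofList, BTree.leafLabels]
  | cons b l ih => simp [ofList, BTree.leafLabels, ih]

lemma le_foldr_max {l : List ℕ} {x : ℕ} (h : x ∈ l) : x ≤ l.foldr max 0 := by
  induction l with
  | nil => simp at h
  | cons a l ih =>
      simp at h
      rcases h with rfl | h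
      · exact le_max_left _ _
      · exact le_trans (ih h) (le_max_right _ _)

lemma foldr_max_le {l : List ℕ} {w : ℕ} (h : ∀ x ∈ l, x ≤ w) : l.foldr max 0 ≤ w := by
  induction l with
  | nil => simp
  | cons a l ih =>
      simp only [List.foldr]
      exact max_le (h a (by simp)) (ih fun x hx => h x (by simp [hx]))

end BTree2

/-- If `F₁ ⊆ F₂` and every edge of `F₂ ∖ F₁` intersects `V(F₁)` only in
`∂(F₂)`, then `bw(F₁) ≤ bw(F₂)`. -/
theorem bw_mono_of_bnd (E F₁ F₂ : Finset (Finset V)) (hF₂E : F₂ ⊆ E)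
    (hne : ∀ e ∈ E, e.Nonempty) (h12 : F₁ ⊆ F₂)
    (hbd : ∀ e ∈ F₂ \ F₁, e ∩ vtxs F₁ ⊆ ebnd E F₂) :
    ebw E F₁ ≤ ebw E F₂ := by
  
  classical
  rcases F₁.eq_empty_or_nonempty with h1 | h1
  · have hempty : {w | ∃ t : BTree (Finset V), IsBD F₁ t ∧ bdWidth E F₁ t = w} = ∅ := by
      ext w
      simp only [Set.mem_setOf_eq, Set.mem_empty_iff_false, iff_false]
      rintro ⟨t, ht, -⟩
      have : t.leafLabels ≠ 0 := by
        intro h0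
        have := BTree2.card_leafLabels_pos t
        rw [h0] at this; simp at this
      obtain ⟨a, ha⟩ := Multiset.exists_mem_of_ne_zero this
      have : a ∈ F₁ := by rw [← ht]; simpa using ha
      simp [h1] at this
    simp [ebw, hempty, Nat.sInf_empty]
  · have h2 : F₂.Nonempty := h1.mono h12
    -- a branch-decomposition of F₂ exists
    have hS₂ : {w | ∃ t : BTree (Finset V), IsBD F₂ t ∧ bdWidth E F₂ t = w}.Nonempty := by
      obtain ⟨a, l, hl⟩ : ∃ a l, F₂.toList = a :: l := by
        cases hl : F₂.toList with
        | nil => exact absurd (Finset.toList_eq_nil.mp hl) h2.ne_empty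
        | cons a l => exact ⟨a, l, rfl⟩
      refine ⟨_, BTree2.ofList a l, ?_, rfl⟩
      have : ((a :: l : List (Finset V)) : Multiset (Finset V)).toFinset = F₂ := by
        rw [← hl]; simp
      simpa [IsBD, BTree2.leafLabels_ofList] using this
    obtain ⟨t, ht, hw⟩ := Nat.sInf_mem hS₂
    -- prune t to F₁
    obtain ⟨t', ht'⟩ : ∃ t', BTree2.prune F₁ t = some t' := by
      cases hp : BTree2.prune F₁ t with
      | some t' => exact ⟨t', rfl⟩
      | none =>
        exfalso
        have key := BTree2.leafLabels_prune F₁ t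
        rw [hp] at key
        obtain ⟨a, ha⟩ := h1
        have haF₂ : a ∈ t.leafLabels := by
          have : a ∈ t.leafLabels.toFinset := by rw [ht]; exact h12 ha
          simpa using this
        have : a ∈ t.leafLabels.filter (· ∈ F₁) := Multiset.mem_filter.mpr ⟨haF₂, ha⟩
        rw [← key] at this
        simp at this
    have hlab : t'.leafLabels = t.leafLabels.filter (· ∈ F₁) := by
      have := BTree2.leafLabels_prune F₁ t
      rwa [ht'] at this
    have hbd' : IsBD F₁ t' := by
      unfold IsBD
      rw [hlab, Multiset.toFinset_filter, ht]
      ext e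
      simp only [Finset.mem_filter]
      exact ⟨fun h => h.2, fun h => ⟨h12 h, h⟩⟩
    -- key subset property of middle sets
    have hmid : ∀ q ∈ t'.nodes, ∃ p ∈ t.nodes,
        midSet E F₁ t' q ⊆ midSet E F₂ t p := by
      intro q hq
      obtain ⟨p, hp, hql⟩ := BTree2.nodes_prune ht' q hq
      refine ⟨p, hp, ?_⟩
      intro v hv
      rw [midSet, Finset.mem_inter] at hv
      obtain ⟨hvl, hvu⟩ := hv
      -- lower side
      have hvF₁ : v ∈ vtxs F₁ ∧ v ∈ vtxs (lowerSet p) := by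
        rw [vtxs, Finset.mem_sup] at hvl
        obtain ⟨e, he, hve⟩ := hvl
        rw [lowerSet, hql, Multiset.toFinset_filter, Finset.mem_filter] at he
        constructor
        · rw [vtxs, Finset.mem_sup]; exact ⟨e, he.2, hve⟩
        · rw [vtxs, Finset.mem_sup]
          exact ⟨e, by rw [lowerSet]; exact he.1, hve⟩
      -- upper side
      have hvu' : v ∈ vtxs (upperSet E F₂ t p) := by
        rw [vtxs, Finset.mem_sup] at hvu
        obtain ⟨e, he, hve⟩ := hvu
        rw [upperSet, Finset.mem_union] at he
        rcases he with he | he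
        · -- e is a leaf outside q in t'
          rw [hlab, hql, ← Multiset.filter_sub] at he
          have : e ∈ (t.leafLabels - p.leafLabels).toFinset := by
            rw [Multiset.mem_toFinset] at he ⊢
            exact Multiset.mem_of_mem_filter he
          rw [vtxs, Finset.mem_sup]
          exact ⟨e, by rw [upperSet, Finset.mem_union]; exact Or.inl this, hve⟩
        · rw [Finset.mem_sdiff] at he
          by_cases heF₂ : e ∈ F₂
          · -- e ∈ F₂ \ F₁ : use the boundary hypothesis
            have hvb : v ∈ ebnd E F₂ :=
              hbd e (Finset.mem_sdiff.mpr ⟨heF₂, he.2⟩)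
                (Finset.mem_inter.mpr ⟨hve, hvF₁.1⟩)
            rw [ebnd, Finset.mem_inter] at hvb
            have := hvb.2
            rw [vtxs, Finset.mem_sup] at this ⊢
            obtain ⟨f, hf, hvf⟩ := this
            exact ⟨f, by rw [upperSet, Finset.mem_union]; exact Or.inr hf, hvf⟩
          · rw [vtxs, Finset.mem_sup]
            refine ⟨e, ?_, hve⟩
            rw [upperSet, Finset.mem_union]
            exact Or.inr (Finset.mem_sdiff.mpr ⟨he.1, heF₂⟩)
      rw [midSet, Finset.mem_inter]
      exact ⟨hvF₁.2, hvu'⟩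
    -- width comparison
    have hwle : bdWidth E F₁ t' ≤ bdWidth E F₂ t := by
      apply BTree2.foldr_max_le
      intro x hx
      rw [List.mem_map] at hx
      obtain ⟨q, hq, rfl⟩ := hx
      obtain ⟨p, hp, hsub⟩ := hmid q hq
      calc (midSet E F₁ t' q).card ≤ (midSet E F₂ t p).card := Finset.card_le_card hsub
        _ ≤ bdWidth E F₂ t := BTree2.le_foldr_max (List.mem_map_of_mem (f := fun p => (midSet E F₂ t p).card) hp)
    calc ebw E F₁ ≤ bdWidth E F₁ t' := Nat.sInf_le ⟨t', hbd', rfl⟩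
      _ ≤ bdWidth E F₂ t := hwle
      _ = ebw E F₂ := hw
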